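/- arXiv:2010.06309 — 2 statements merged into one kernel-verified Lean document; each statement's English description precedes it below -/
import Mathlib

section
/- Let X be a finite set with n ≥ 2 elements and k(x,y) = 1 for all x ≠ y (so the underlying graph of L is the complete graph K_n). Then for every α ∈ (0, 1/2), the Markov generator L satisfies CD_Υ( √(2n(1−2α)), n/α ), i.e. Ψ_{2,Υ}(f)(x) ≥ √(2n(1−2α))·Ψ_Υ(f)(x) + (α/n)·max{−L f(x), 0}² for all f : X → ℝ and all x ∈ X. -/
open Real Filter MeasureTheory Set

/-- `Υ(r) = e^r - r - 1`. -/
noncomputable def Ups (r : ℝ) : ℝ := Real.exp r - r - 1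

/-- `M₁(x) = ∑_{y ≠ x} k(x,y)`. -/
noncomputable def M1fn {X : Type*} (k : X → X → ℝ) (x : X) : ℝ :=
  ∑' y : {y : X // y ≠ x}, k x y

/-- The Markov generator `L f(x) = ∑_y k(x,y)(f(y) - f(x))`. -/
noncomputable def genOp {X : Type*} (k : X → X → ℝ) (f : X → ℝ) (x : X) : ℝ :=
  ∑' y, k x y * (f y - f x)

/-- `Ψ_Υ(f)(x) = ∑_y k(x,y) Υ(f(y) - f(x))`. -/
noncomputable def psiUps {X : Type*} (k : X → X → ℝ) (f : X → ℝ) (x : X) : ℝ :=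
  ∑' y, k x y * Ups (f y - f x)

/-- `B_{Υ'}(f,g)(x) = ∑_y k(x,y) Υ'(f(y)-f(x)) (g(y)-g(x))`. -/
noncomputable def bUps {X : Type*} (k : X → X → ℝ) (f g : X → ℝ) (x : X) : ℝ :=
  ∑' y, k x y * (Real.exp (f y - f x) - 1) * (g y - g x)

/-- `Ψ_{2,Υ}(f) = (1/2)(L Ψ_Υ(f) - B_{Υ'}(f, L f))`. -/
noncomputable def psi2Ups {X : Type*} (k : X → X → ℝ) (f : X → ℝ) (x : X) : ℝ :=
  (1/2) * (genOp k (psiUps k f) x - bUps k f (genOp k f) x)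

/-- Boundedness of a real-valued function on the state space. -/
def BddFun {X : Type*} (f : X → ℝ) : Prop := ∃ B : ℝ, ∀ x, |f x| ≤ B

/-- The standing assumptions on the transition rates: nonnegative off-diagonal rates,
`M₁(x) < ∞` (summability), `k(x,x) = -M₁(x)`, and `M₂(x) < ∞`. -/
def KernelSetting {X : Type*} (k : X → X → ℝ) : Prop :=
  (∀ x y, x ≠ y → 0 ≤ k x y) ∧
  (∀ x : X, Summable fun y : {y : X // y ≠ x} => k x y) ∧
  (∀ x : X, k x x = -M1fn k x) ∧
  (∀ x : X, Summable fun y : {y : X // y ≠ x} => k x y * M1fn k y)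

/-- A CD-function: continuous and nonnegative on `[0,∞)` with `F(0) = 0`, `F(r)/r`
strictly increasing on `(0,∞)` and `1/F` integrable at `∞`. -/
def IsCDFunction (F : ℝ → ℝ) : Prop :=
  ContinuousOn F (Ici 0) ∧ F 0 = 0 ∧ (∀ r : ℝ, 0 ≤ r → 0 ≤ F r) ∧
  StrictMonoOn (fun r => F r / r) (Ioi 0) ∧
  ∃ c : ℝ, 0 < c ∧ IntegrableOn (fun r => 1 / F r) (Ioi c)

/-- The trivial extension `F₀` of `F : [0,∞) → [0,∞)` by `0` on `(-∞,0)`. -/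
noncomputable def trivExt (F : ℝ → ℝ) : ℝ → ℝ := fun r => if 0 ≤ r then F r else 0

/-- The condition `CD_Υ(κ,F)` at a point `x`. -/
def CDUpsAt {X : Type*} (k : X → X → ℝ) (κ : ℝ) (F : ℝ → ℝ) (x : X) : Prop :=
  ∀ f : X → ℝ, BddFun f →
    κ * psiUps k f x + trivExt F (-genOp k f x) ≤ psi2Ups k f x

/-- The condition `CD_Υ(κ,F)` (at every point). -/
def CDUps {X : Type*} (k : X → X → ℝ) (κ : ℝ) (F : ℝ → ℝ) : Prop :=
  ∀ x : X, CDUpsAt k κ F x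


/-- Helper: nonneg derivative on `[0,∞)` plus `F 0 = 0` gives `F ≥ 0` on `[0,∞)`. -/
lemma nonneg_of_deriv {F F' : ℝ → ℝ} (hd : ∀ x, HasDerivAt F (F' x) x)
    (hF0 : F 0 = 0) (h' : ∀ x, 0 ≤ x → 0 ≤ F' x) : ∀ x, 0 ≤ x → 0 ≤ F x := by
  intro x hx
  have hmono : MonotoneOn F (Set.Ici 0) := by
    apply monotoneOn_of_deriv_nonneg (convex_Ici 0)
      (fun y _ => ((hd y).differentiableAt).continuousAt.continuousWithinAt)
      (fun y hy => ((hd y).differentiableAt).differentiableWithinAt)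
    intro y hy
    rw [(hd y).deriv]
    exact h' y (le_of_lt (by simpa using hy))
  have := hmono Set.self_mem_Ici (by exact hx : x ∈ Set.Ici 0) hx
  simpa [hF0] using this

lemma exp_quad_lower {x : ℝ} (hx : 0 ≤ x) : 1 + x + x^2/2 ≤ Real.exp x := by
  have := nonneg_of_deriv (F := fun x => Real.exp x - (1 + x + x^2/2))
    (F' := fun x => Real.exp x - (1 + x))
    (fun y => by
      exact ((Real.hasDerivAt_exp y).sub
        (((hasDerivAt_id y).const_add 1).add (((hasDerivAt_pow 2 y)).div_const 2))).congr_deriv (by simp))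
    (by norm_num) (fun y hy => by nlinarith [Real.add_one_le_exp y]) x hx
  linarith

lemma exp_quad_upper {x : ℝ} (hx : x ≤ 0) : Real.exp x ≤ 1 + x + x^2/2 := by
  have h := nonneg_of_deriv (F := fun t => (1 + (-t) + (-t)^2/2) - Real.exp (-t))
    (F' := fun t => Real.exp (-t) - (1 - t))
    (fun y => by
      have h1 : HasDerivAt (fun t : ℝ => Real.exp (-t)) (-Real.exp (-y)) y := by
        exact ((Real.hasDerivAt_exp (-y)).comp y (hasDerivAt_neg y)).congr_deriv (by ring)
      have h2 : HasDerivAt (fun t : ℝ => 1 + (-t) + (-t)^2/2) (-1 + y) y := by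
        have h3 : HasDerivAt (fun t : ℝ => 1 + (-t) + (-t)^2/2)
            (0 + -1 + (((2:ℕ):ℝ) * (-y)^1 * (-1))/2) y :=
          (((hasDerivAt_const y (1:ℝ)).add (hasDerivAt_neg y)).add
            (((hasDerivAt_pow 2 (-y)).comp y (hasDerivAt_neg y)).div_const 2))
        convert h3 using 1
        push_cast
        ring
      have h4 := h2.sub h1
      exact h4.congr_deriv (by ring))
    (by norm_num)
    (fun y hy => by nlinarith [Real.add_one_le_exp (-y)]) (-x) (by linarith)
  simp only [neg_neg] at h
  linarith

lemma one_sub_mul_exp_le (y : ℝ) : (1 - y) * Real.exp y ≤ 1 := by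
  have h := Real.add_one_le_exp (-y)
  rcases le_or_gt (1 - y) 0 with h1 | h1
  · nlinarith [Real.exp_pos y]
  · have h2 := mul_le_mul_of_nonneg_right h (Real.exp_pos y).le
    rw [← Real.exp_add] at h2
    simp only [neg_add_cancel, Real.exp_zero] at h2
    nlinarith

/-- Padé-type bound: `(2 - x) * exp x ≤ 2 + x` for `x ≥ 0`. -/
lemma pade {x : ℝ} (hx : 0 ≤ x) : (2 - x) * Real.exp x ≤ 2 + x := by
  have h := nonneg_of_deriv (F := fun t => 2 + t - (2 - t) * Real.exp t)
    (F' := fun t => 1 - (1 - t) * Real.exp t)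
    (fun y => by
      have h1 : HasDerivAt (fun t : ℝ => (2 - t) * Real.exp t)
          ((0 - 1) * Real.exp y + (2 - y) * Real.exp y) y := by
        exact ((hasDerivAt_const y (2:ℝ)).sub (hasDerivAt_id y)).mul
          (Real.hasDerivAt_exp y) |>.congr_deriv (by simp)
      have h2 := (((hasDerivAt_id y).const_add 2).sub h1)
      exact h2.congr_deriv (by ring))
    (by norm_num) (fun y hy => by have := one_sub_mul_exp_le y; linarith) x hx
  linarith


lemma Hfn_nonneg (z : ℝ) : 0 ≤ z * Real.exp z - Real.exp z + 1 := by
  nlinarith [one_sub_mul_exp_le z]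

lemma Hfn_pos {z : ℝ} (hz : z ≠ 0) : 0 < z * Real.exp z - Real.exp z + 1 := by
  have h := Real.add_one_lt_exp (neg_ne_zero.2 hz)
  rcases le_or_gt (1 - z) 0 with h1 | h1
  · nlinarith [Real.exp_pos z]
  · have h2 := mul_lt_mul_of_pos_right h (Real.exp_pos z)
    rw [← Real.exp_add] at h2
    simp only [neg_add_cancel, Real.exp_zero] at h2
    nlinarith

lemma UpsFn_nonneg (z : ℝ) : 0 ≤ Real.exp z - z - 1 := by
  nlinarith [Real.add_one_le_exp z]

/-- key two-sided bound: `2 (e^z - 1)^2 ≤ z (e^{2z} - 1)` . -/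
lemma two_sq_le (z : ℝ) : 2 * (Real.exp z - 1)^2 ≤ z * ((Real.exp z)^2 - 1) := by
  rcases le_or_gt 0 z with hz | hz
  · have hp := pade hz
    have hu : 1 + z ≤ Real.exp z := by linarith [Real.add_one_le_exp z]
    nlinarith [mul_le_mul_of_nonneg_right hp (by linarith : (0:ℝ) ≤ Real.exp z - 1)]
  · have hp := pade (by linarith : (0:ℝ) ≤ -z)
    have huv : Real.exp z * Real.exp (-z) = 1 := by
      rw [← Real.exp_add]; simp
    have hu1 : Real.exp z ≤ 1 := Real.exp_le_one_iff.2 hz.le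
    have h2 := mul_le_mul_of_nonneg_right hp (Real.exp_pos z).le
    -- (2 + z) * exp(-z) * exp z ≤ (2 - z) * exp z  →  (2+z) ≤ (2-z) exp z
    have h3 : 2 + z ≤ (2 - z) * Real.exp z := by nlinarith [Real.exp_pos (-z)]
    nlinarith [mul_le_mul_of_nonneg_right h3 (by linarith : (0:ℝ) ≤ 1 - Real.exp z)]

/-- `Ups z ≤ H z` for `z ≥ 0`. -/
lemma Ups_le_H {z : ℝ} (hz : 0 ≤ z) :
    Real.exp z - z - 1 ≤ z * Real.exp z - Real.exp z + 1 := by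
  have h := nonneg_of_deriv (F := fun t => t * Real.exp t - 2 * Real.exp t + t + 2)
    (F' := fun t => t * Real.exp t - Real.exp t + 1)
    (fun y => by
      have h1 : HasDerivAt (fun t : ℝ => t * Real.exp t)
          (1 * Real.exp y + y * Real.exp y) y :=
        (hasDerivAt_id y).mul (Real.hasDerivAt_exp y)
      have h2 := ((h1.sub ((Real.hasDerivAt_exp y).const_mul 2)).add
        (hasDerivAt_id y)).add_const 2
      exact h2.congr_deriv (by ring))
    (by norm_num) (fun y hy => by nlinarith [Hfn_nonneg y]) z hz
  linarith

lemma sinh_lower {x : ℝ} (hx : 0 ≤ x) : 2 * x ≤ Real.exp x - Real.exp (-x) := by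
  have h := nonneg_of_deriv (F := fun t => Real.exp t - Real.exp (-t) - 2 * t)
    (F' := fun t => Real.exp t + Real.exp (-t) - 2)
    (fun y => by
      have h1 : HasDerivAt (fun t : ℝ => Real.exp (-t)) (-Real.exp (-y)) y := by
        exact ((Real.hasDerivAt_exp (-y)).comp y (hasDerivAt_neg y)).congr_deriv (by ring)
      have h2 := ((Real.hasDerivAt_exp y).sub h1).sub ((hasDerivAt_id y).const_mul 2)
      exact h2.congr_deriv (by ring))
    (by norm_num)
    (fun y hy => by
      have huv : Real.exp y * Real.exp (-y) = 1 := by rw [← Real.exp_add]; simp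
      nlinarith [Real.exp_pos y, Real.exp_pos (-y), sq_nonneg (Real.exp y - 1)]) x hx
  linarith

lemma cosh_quad (z : ℝ) : 1 + z^2/2 ≤ (Real.exp z + Real.exp (-z))/2 := by
  have key : ∀ w : ℝ, 0 ≤ w → 1 + w^2/2 ≤ (Real.exp w + Real.exp (-w))/2 := by
    intro w hw
    have hs := sinh_lower (by linarith : (0:ℝ) ≤ w/2)
    have he1 : Real.exp (w/2) * Real.exp (-(w/2)) = 1 := by rw [← Real.exp_add]; simp
    have he2 : Real.exp w = Real.exp (w/2) * Real.exp (w/2) := by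
      rw [← Real.exp_add]; ring_nf
    have he3 : Real.exp (-w) = Real.exp (-(w/2)) * Real.exp (-(w/2)) := by
      rw [← Real.exp_add]; ring_nf
    nlinarith [Real.exp_pos (w/2), Real.exp_pos (-(w/2))]
  rcases le_or_gt 0 z with hz | hz
  · exact key z hz
  · have := key (-z) (by linarith)
    simp only [neg_neg] at this
    nlinarith [this]


noncomputable def Cf (z : ℝ) : ℝ := (Real.exp z + Real.exp (-z))/2 - 1
noncomputable def Uf (z : ℝ) : ℝ := Real.exp z - z - 1
noncomputable def Hf (z : ℝ) : ℝ := z * Real.exp z - Real.exp z + 1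
noncomputable def phiF (z : ℝ) : ℝ := Cf z - (Uf z)^2 / Hf z

lemma hasDerivAt_phiF {y : ℝ} (hy : y ≠ 0) :
    HasDerivAt phiF ((Real.exp y - Real.exp (-y))/2 -
      (2 * Uf y * (Real.exp y - 1) * Hf y - (Uf y)^2 * (y * Real.exp y)) / (Hf y)^2) y := by
  have hCd : HasDerivAt Cf ((Real.exp y - Real.exp (-y))/2) y := by
    have h1 : HasDerivAt (fun t : ℝ => Real.exp (-t)) (-Real.exp (-y)) y := by
      exact ((Real.hasDerivAt_exp (-y)).comp y (hasDerivAt_neg y)).congr_deriv (by ring)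
    have h2 := (((Real.hasDerivAt_exp y).add h1).div_const 2).sub_const 1
    exact h2.congr_deriv (by ring)
  have hUd : HasDerivAt Uf (Real.exp y - 1) y := by
    have h2 := ((Real.hasDerivAt_exp y).sub (hasDerivAt_id y)).sub_const 1
    exact h2
  have hHd : HasDerivAt Hf (y * Real.exp y) y := by
    have h1 : HasDerivAt (fun t : ℝ => t * Real.exp t)
        (1 * Real.exp y + y * Real.exp y) y := (hasDerivAt_id y).mul (Real.hasDerivAt_exp y)
    have h2 := (h1.sub (Real.hasDerivAt_exp y)).add_const 1
    exact h2.congr_deriv (by ring)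
  have hU2 : HasDerivAt (fun z => (Uf z)^2) (2 * Uf y * (Real.exp y - 1)) y := by
    have := hUd.pow 2
    exact this.congr_deriv (by ring)
  have hdiv := hU2.div hHd (ne_of_gt (Hfn_pos hy))
  exact hCd.sub hdiv

lemma deriv_phiF_key (y : ℝ) :
    ((Real.exp y - Real.exp (-y))/2) *
      (((Real.exp y - Real.exp (-y))/2) * (Hf y)^2 - 2 * Uf y * (Real.exp y - 1) * Hf y
        + (y * Real.exp y) * (Uf y)^2) ≥ 0 := by
  set s := (Real.exp y - Real.exp (-y))/2 with hs
  have huv : Real.exp y * Real.exp (-y) = 1 := by rw [← Real.exp_add]; simp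
  have hst : (Real.exp y - 1)^2 ≤ s * (y * Real.exp y) := by
    have h2 := two_sq_le y
    have heq : s * (y * Real.exp y) = y * ((Real.exp y)^2 - 1) / 2 := by
      rw [hs]
      linear_combination (-(y/2)) * huv
    rw [heq]
    linarith
  nlinarith [sq_nonneg (s * Hf y - Uf y * (Real.exp y - 1)),
    mul_nonneg (sq_nonneg (Uf y)) (sub_nonneg.2 hst)]

lemma keyA_pos {z : ℝ} (hz : 0 < z) : (Uf z)^2 ≤ Hf z * Cf z := by
  have hmono : MonotoneOn phiF (Set.Ioi 0) := by
    apply monotoneOn_of_deriv_nonneg (convex_Ioi 0)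
    · intro y hy
      exact ((hasDerivAt_phiF (ne_of_gt (by simpa using hy))).differentiableAt).continuousAt.continuousWithinAt
    · intro y hy
      rw [interior_Ioi] at hy
      exact ((hasDerivAt_phiF (ne_of_gt (by simpa using hy))).differentiableAt).differentiableWithinAt
    · intro y hy
      rw [interior_Ioi] at hy
      have hy0 : 0 < y := by simpa using hy
      rw [(hasDerivAt_phiF (ne_of_gt hy0)).deriv]
      set s := (Real.exp y - Real.exp (-y))/2 with hs
      have hspos : 0 < s := by
        rw [hs]
        have : Real.exp (-y) < Real.exp y := Real.exp_lt_exp.2 (by linarith)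
        linarith
      have hkey := deriv_phiF_key y
      rw [← hs] at hkey
      have hE : 0 ≤ s * (Hf y)^2 - 2 * Uf y * (Real.exp y - 1) * Hf y
          + (y * Real.exp y) * (Uf y)^2 :=
        (mul_nonneg_iff_of_pos_left hspos).1 (by linarith [hkey])
      have hHsq : (0:ℝ) < (Hf y)^2 := by
        have := Hfn_pos (ne_of_gt hy0)
        unfold Hf
        positivity
      rw [sub_nonneg, div_le_iff₀ hHsq]
      linarith [hE]
  have hlim : Tendsto phiF (nhdsWithin 0 (Set.Ioi 0)) (nhds 0) := by
    have hC : Tendsto Cf (nhdsWithin 0 (Set.Ioi 0)) (nhds 0) := by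
      have hc : Continuous Cf := by
        unfold Cf
        exact ((Real.continuous_exp.add (Real.continuous_exp.comp continuous_neg)).div_const 2).sub continuous_const
      have h5 := (hc.tendsto 0).mono_left (nhdsWithin_le_nhds (s := Set.Ioi (0:ℝ)))
      simpa [Cf] using h5
    have hQ : Tendsto (fun z => (Uf z)^2 / Hf z) (nhdsWithin 0 (Set.Ioi 0)) (nhds 0) := by
      apply squeeze_zero' (g := Uf)
      · filter_upwards [self_mem_nhdsWithin] with ε hε
        apply div_nonneg (sq_nonneg _)
        unfold Hf
        exact Hfn_nonneg ε
      · filter_upwards [self_mem_nhdsWithin] with ε hε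
        have hε0 : 0 < ε := hε
        have hH : 0 < Hf ε := by unfold Hf; exact Hfn_pos (ne_of_gt hε0)
        rw [div_le_iff₀ hH]
        have h1 : 0 ≤ Uf ε := by unfold Uf; exact UpsFn_nonneg ε
        have h2 : Uf ε ≤ Hf ε := by unfold Uf Hf; exact Ups_le_H hε0.le
        nlinarith [mul_nonneg h1 (sub_nonneg.2 h2)]
      · have hu : Continuous Uf := by
          unfold Uf
          continuity
        have := (hu.tendsto 0).mono_left (nhdsWithin_le_nhds (s := Set.Ioi (0:ℝ)))
        simpa [Uf] using this
    have := hC.sub hQ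
    rw [sub_zero] at this
    exact this
  have hev : ∀ᶠ ε in nhdsWithin 0 (Set.Ioi 0), phiF ε ≤ phiF z := by
    filter_upwards [self_mem_nhdsWithin,
      nhdsWithin_le_nhds (Ioo_mem_nhds (by linarith : (-1:ℝ) < 0) hz)] with ε hε1 hε2
    exact hmono hε1 hz hε2.2.le
  have h0 : (0:ℝ) ≤ phiF z := le_of_tendsto hlim hev
  have hH : 0 < Hf z := by unfold Hf; exact Hfn_pos (ne_of_gt hz)
  have h3 := (div_le_iff₀ hH).1 (by unfold phiF at h0; linarith : (Uf z)^2 / Hf z ≤ Cf z)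
  rw [mul_comm]
  exact h3

lemma keyA_neg {z : ℝ} (hz : z < 0) : (Uf z)^2 ≤ Hf z * Cf z := by
  have hanti : AntitoneOn phiF (Set.Iio 0) := by
    apply antitoneOn_of_deriv_nonpos (convex_Iio 0)
    · intro y hy
      exact ((hasDerivAt_phiF (ne_of_lt (by simpa using hy))).differentiableAt).continuousAt.continuousWithinAt
    · intro y hy
      rw [interior_Iio] at hy
      exact ((hasDerivAt_phiF (ne_of_lt (by simpa using hy))).differentiableAt).differentiableWithinAt
    · intro y hy
      rw [interior_Iio] at hy
      have hy0 : y < 0 := by simpa using hy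
      rw [(hasDerivAt_phiF (ne_of_lt hy0)).deriv]
      set s := (Real.exp y - Real.exp (-y))/2 with hs
      have hsneg : s < 0 := by
        rw [hs]
        have : Real.exp y < Real.exp (-y) := Real.exp_lt_exp.2 (by linarith)
        linarith
      have hkey := deriv_phiF_key y
      rw [← hs] at hkey
      have hE : s * (Hf y)^2 - 2 * Uf y * (Real.exp y - 1) * Hf y
          + (y * Real.exp y) * (Uf y)^2 ≤ 0 := by
        have h2 : 0 ≤ (-s) * (-(s * (Hf y)^2 - 2 * Uf y * (Real.exp y - 1) * Hf y
            + (y * Real.exp y) * (Uf y)^2)) := by linarith [hkey]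
        have h3 := (mul_nonneg_iff_of_pos_left (by linarith : (0:ℝ) < -s)).1 h2
        linarith
      have hHsq : (0:ℝ) < (Hf y)^2 := by
        have := Hfn_pos (ne_of_lt hy0)
        unfold Hf
        positivity
      rw [sub_nonpos, le_div_iff₀ hHsq]
      linarith [hE]
  have hlim : Tendsto phiF (nhdsWithin 0 (Set.Iio 0)) (nhds 0) := by
    have hC : Tendsto Cf (nhdsWithin 0 (Set.Iio 0)) (nhds 0) := by
      have hc : Continuous Cf := by
        unfold Cf
        exact ((Real.continuous_exp.add (Real.continuous_exp.comp continuous_neg)).div_const 2).sub continuous_const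
      have h5 := (hc.tendsto 0).mono_left (nhdsWithin_le_nhds (s := Set.Iio (0:ℝ)))
      simpa [Cf] using h5
    have hQ : Tendsto (fun z => (Uf z)^2 / Hf z) (nhdsWithin 0 (Set.Iio 0)) (nhds 0) := by
      apply squeeze_zero' (g := fun ε => ε^2)
      · filter_upwards [self_mem_nhdsWithin] with ε hε
        apply div_nonneg (sq_nonneg _)
        unfold Hf
        exact Hfn_nonneg ε
      · filter_upwards [self_mem_nhdsWithin,
          nhdsWithin_le_nhds (Ioo_mem_nhds (by norm_num : (-1/2:ℝ) < 0) (by norm_num : (0:ℝ) < 1))]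
          with ε hε1 hε2
        have hε0 : ε < 0 := hε1
        have hεhalf : -1/2 < ε := hε2.1
        have hH : 0 < Hf ε := by unfold Hf; exact Hfn_pos (ne_of_lt hε0)
        rw [div_le_iff₀ hH]
        have hq := exp_quad_upper hε0.le
        have hU1 : 0 ≤ Uf ε := by unfold Uf; exact UpsFn_nonneg ε
        have hU2 : Uf ε ≤ ε^2/2 := by unfold Uf; linarith
        have hH2 : ε^2/2 + ε^3/2 ≤ Hf ε := by
          unfold Hf
          nlinarith [mul_nonneg (by linarith : (0:ℝ) ≤ 1 - ε) (sub_nonneg.2 hq)]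
        nlinarith [sq_nonneg ε, mul_nonneg (mul_nonneg (sq_nonneg ε) (sq_nonneg ε))
          (by linarith : (0:ℝ) ≤ 1/4 + ε/2)]
      · have h6 : Tendsto (fun ε : ℝ => ε^2) (nhds 0) (nhds 0) := by
          have := (continuous_pow 2 (M := ℝ)).tendsto 0
          simpa using this
        exact h6.mono_left (nhdsWithin_le_nhds (s := Set.Iio (0:ℝ)))
    have := hC.sub hQ
    rw [sub_zero] at this
    exact this
  have hev : ∀ᶠ ε in nhdsWithin 0 (Set.Iio 0), phiF ε ≤ phiF z := by
    filter_upwards [self_mem_nhdsWithin,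
      nhdsWithin_le_nhds (Ioo_mem_nhds hz (by linarith : (0:ℝ) < 1))] with ε hε1 hε2
    exact hanti hz hε1 hε2.1.le
  have h0 : (0:ℝ) ≤ phiF z := le_of_tendsto hlim hev
  have hH : 0 < Hf z := by unfold Hf; exact Hfn_pos (ne_of_lt hz)
  have h3 := (div_le_iff₀ hH).1 (by unfold phiF at h0; linarith : (Uf z)^2 / Hf z ≤ Cf z)
  rw [mul_comm]
  exact h3

/-- The central inequality: `(e^z - z - 1)^2 ≤ (z e^z - e^z + 1) ((e^z + e^{-z})/2 - 1)`. -/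
lemma keyA (z : ℝ) : (Real.exp z - z - 1)^2
    ≤ (z * Real.exp z - Real.exp z + 1) * ((Real.exp z + Real.exp (-z))/2 - 1) := by
  rcases lt_trichotomy z 0 with h | h | h
  · have := keyA_neg h
    unfold Uf Hf Cf at this
    exact this
  · subst h
    norm_num
  · have := keyA_pos h
    unfold Uf Hf Cf at this
    exact this

/-- Pointwise curvature inequality for the complete graph. -/
lemma pointwise_CD {N α : ℝ} (hN : 2 ≤ N) (hα0 : 0 < α) (hα1 : α < 1/2) (z : ℝ) :
    Real.sqrt (2 * N * (1 - 2 * α)) * Ups z + α * max (-z) 0 ^ 2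
      ≤ (Ups z + Ups (-z))/2 + N/2 * ((Real.exp z - 1) * z - Ups z) := by
  set κ := Real.sqrt (2 * N * (1 - 2 * α)) with hκ
  have hκ0 : 0 ≤ κ := Real.sqrt_nonneg _
  have hκsq : κ^2 = 2 * N * (1 - 2 * α) := by
    rw [hκ]
    exact Real.sq_sqrt (by nlinarith)
  set U := Ups z with hU
  set C := (Ups z + Ups (-z))/2 with hC
  set m := max (-z) 0 ^ 2 with hm
  set H := (Real.exp z - 1) * z - Ups z with hH
  clear_value κ U C m H
  have hUnn : 0 ≤ U := by rw [hU]; unfold Ups; exact UpsFn_nonneg z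
  have hHnn : 0 ≤ H := by
    have := Hfn_nonneg z
    rw [hH]; unfold Ups; linarith
  have hCnn : 0 ≤ C := by
    have h1 := UpsFn_nonneg (-z)
    have h2 := UpsFn_nonneg z
    rw [hC]; unfold Ups; unfold Ups at h1 h2; linarith
  have hA : U^2 ≤ H * C := by
    have := keyA z
    rw [hU, hH, hC]; unfold Ups
    calc (Real.exp z - z - 1)^2
        ≤ (z * Real.exp z - Real.exp z + 1) * ((Real.exp z + Real.exp (-z))/2 - 1) := this
      _ = ((Real.exp z - 1) * z - (Real.exp z - z - 1)) *
          ((Real.exp z - z - 1 + (Real.exp (-z) - -z - 1))/2) := by ring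
  have hB : m ≤ 2 * C := by
    rcases le_or_gt z 0 with h | h
    · have hmax : max (-z) 0 = -z := max_eq_left (by linarith)
      rw [hm, hmax, hC]
      unfold Ups
      have := cosh_quad z
      nlinarith
    · have hmax : max (-z) 0 = 0 := max_eq_right (by linarith)
      rw [hm, hmax]
      nlinarith
  have hmnn : 0 ≤ m := by rw [hm]; exact sq_nonneg _
  set D := C - α * m with hD
  clear_value D
  have hDnn : 0 ≤ D := by rw [hD]; nlinarith
  have hK1 : (1 - 2*α) * U^2 ≤ D * H := by
    rw [hD]
    nlinarith [mul_nonneg hHnn (by linarith : 0 ≤ 2*C - m),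
      mul_le_mul_of_nonneg_left hA (by linarith : (0:ℝ) ≤ 1 - 2*α)]
  -- AM-GM step
  have hfinal : κ * U ≤ D + N/2 * H := by
    have haux : 2*N*((1 - 2*α) * U^2) ≤ 2*N*(D*H) :=
      mul_le_mul_of_nonneg_left hK1 (by linarith)
    have h1 : (κ * U)^2 ≤ (D + N/2 * H)^2 := by
      have h2 : (κ * U)^2 = 2 * N * (1 - 2*α) * U^2 := by
        rw [mul_pow, hκsq]
      nlinarith [sq_nonneg (D - N/2 * H), haux, h2]
    have hS : 0 ≤ D + N/2 * H := by
      have : 0 ≤ N/2 * H := mul_nonneg (by linarith) hHnn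
      linarith
    nlinarith [mul_nonneg hκ0 hUnn, hS, h1]
  rw [hD] at hfinal
  linarith

/-- Example 2.9: the complete graph `K_n` (n ≥ 2): `L` satisfies
`CD_Υ(√(2n(1-2α)), n/α)` for every `α ∈ (0,1/2)`. -/
theorem stmt_13 {X : Type*} [Fintype X] (hcard : 2 ≤ Fintype.card X)
    (k : X → X → ℝ) (hkoff : ∀ x y : X, x ≠ y → k x y = 1)
    (hkdiag : ∀ x : X, k x x = 1 - (Fintype.card X : ℝ))
    (α : ℝ) (hα0 : 0 < α) (hα1 : α < 1/2) :
    ∀ (f : X → ℝ) (x : X),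
      Real.sqrt (2 * (Fintype.card X : ℝ) * (1 - 2 * α)) * psiUps k f x +
          α / (Fintype.card X : ℝ) * max (-genOp k f x) 0 ^ 2
        ≤ psi2Ups k f x := by
  intro f x
  classical
  set n := Fintype.card X with hn
  have hn2 : (2:ℝ) ≤ (n:ℝ) := by exact_mod_cast hcard
  have hnpos : (0:ℝ) < (n:ℝ) := by linarith
  have hUpsnn : ∀ r : ℝ, 0 ≤ Ups r := by
    intro r; unfold Ups; exact UpsFn_nonneg r
  have hUps0 : Ups 0 = 0 := by unfold Ups; simp
  -- basic formulas
  have hgen : ∀ (g : X → ℝ) (x' : X), genOp k g x' = ∑ y, (g y - g x') := by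
    intro g x'
    unfold genOp
    rw [tsum_fintype]
    apply Finset.sum_congr rfl
    intro y _
    by_cases h : y = x'
    · subst h; simp
    · rw [hkoff x' y (Ne.symm h), one_mul]
  have hpsi : ∀ (x' : X), psiUps k f x' = ∑ w, Ups (f w - f x') := by
    intro x'
    unfold psiUps
    rw [tsum_fintype]
    apply Finset.sum_congr rfl
    intro y _
    by_cases h : y = x'
    · subst h; simp [hUps0]
    · rw [hkoff x' y (Ne.symm h), one_mul]
  have hdiff : ∀ y : X, genOp k f y - genOp k f x = -(n:ℝ) * (f y - f x) := by
    intro y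
    rw [hgen f y, hgen f x, ← Finset.sum_sub_distrib]
    calc ∑ w, ((f w - f y) - (f w - f x)) = ∑ _w : X, (f x - f y) :=
          Finset.sum_congr rfl (fun w _ => by ring)
      _ = (n:ℝ) * (f x - f y) := by
          rw [Finset.sum_const, Finset.card_univ, nsmul_eq_mul, hn]
      _ = -(n:ℝ) * (f y - f x) := by ring
  have hbu : bUps k f (genOp k f) x
      = ∑ y, (Real.exp (f y - f x) - 1) * (-(n:ℝ) * (f y - f x)) := by
    unfold bUps
    rw [tsum_fintype]
    apply Finset.sum_congr rfl
    intro y _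
    by_cases h : y = x
    · subst h; simp
    · rw [hkoff x y (Ne.symm h), one_mul, hdiff y]
  have hpsi2 : psi2Ups k f x = (1/2) * ((∑ y, (psiUps k f y - psiUps k f x))
      + (n:ℝ) * ∑ y, (Real.exp (f y - f x) - 1) * (f y - f x)) := by
    unfold psi2Ups
    rw [hgen (psiUps k f) x, hbu]
    have h2 : ∑ y, (Real.exp (f y - f x) - 1) * (-(n:ℝ) * (f y - f x))
        = -(n:ℝ) * ∑ y, (Real.exp (f y - f x) - 1) * (f y - f x) := by
      rw [Finset.mul_sum]
      exact Finset.sum_congr rfl (fun y _ => by ring)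
    rw [h2]
    ring
  -- lower bound for ∑ ψ y
  have hlow : ∑ y, Ups (f y - f x) + ∑ y, Ups (f x - f y) ≤ ∑ y, psiUps k f y := by
    have h1 : ∀ y ∈ Finset.univ.erase x, Ups (f x - f y) ≤ psiUps k f y := by
      intro y _
      rw [hpsi y]
      exact Finset.single_le_sum (f := fun w => Ups (f w - f y))
        (fun w _ => hUpsnn _) (Finset.mem_univ x)
    have h2 : ∑ y, Ups (f x - f y) = ∑ y ∈ Finset.univ.erase x, Ups (f x - f y) := by
      rw [← Finset.add_sum_erase _ (fun y => Ups (f x - f y)) (Finset.mem_univ x)]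
      simp [hUps0]
    calc ∑ y, Ups (f y - f x) + ∑ y, Ups (f x - f y)
        = psiUps k f x + ∑ y ∈ Finset.univ.erase x, Ups (f x - f y) := by
          rw [hpsi x, h2]
      _ ≤ psiUps k f x + ∑ y ∈ Finset.univ.erase x, psiUps k f y :=
          add_le_add_right (Finset.sum_le_sum h1) _
      _ = ∑ y, psiUps k f y := Finset.add_sum_erase _ _ (Finset.mem_univ x)
  -- bound on the max term
  set M := max (-genOp k f x) 0 with hMdef
  have hM : M ^ 2 ≤ (n:ℝ) * ∑ y, (max (f x - f y) 0)^2 := by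
    have hM1 : M ≤ ∑ y, max (f x - f y) 0 := by
      rw [hMdef]
      apply max_le
      · rw [hgen f x]
        have h3 : -(∑ y, (f y - f x)) = ∑ y, (f x - f y) := by
          rw [← Finset.sum_neg_distrib]
          exact Finset.sum_congr rfl (fun y _ => by ring)
        rw [h3]
        exact Finset.sum_le_sum (fun y _ => le_max_left _ _)
      · exact Finset.sum_nonneg (fun y _ => le_max_right _ _)
    have hM0 : (0:ℝ) ≤ M := le_max_right _ _
    have hM2 : M^2 ≤ (∑ y, max (f x - f y) 0)^2 := pow_le_pow_left₀ hM0 hM1 2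
    have hM3 := sq_sum_le_card_mul_sum_sq (s := (Finset.univ : Finset X))
      (f := fun y => max (f x - f y) 0)
    rw [Finset.card_univ] at hM3
    calc M^2 ≤ (∑ y, max (f x - f y) 0)^2 := hM2
      _ ≤ (n:ℝ) * ∑ y, (max (f x - f y) 0)^2 := by exact_mod_cast hM3
  -- pointwise inequality
  have hpt : ∀ y : X,
      Real.sqrt (2*(n:ℝ)*(1-2*α)) * Ups (f y - f x) + α * (max (f x - f y) 0)^2
        ≤ (Ups (f y - f x) + Ups (f x - f y))/2
          + (n:ℝ)/2 * ((Real.exp (f y - f x) - 1)*(f y - f x) - Ups (f y - f x)) := by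
    intro y
    have := pointwise_CD hn2 hα0 hα1 (f y - f x)
    simpa [neg_sub] using this
  -- assemble
  set κ := Real.sqrt (2*(n:ℝ)*(1-2*α)) with hκ
  have step1 : α / (n:ℝ) * M^2 ≤ α * ∑ y, (max (f x - f y) 0)^2 := by
    have h4 := mul_le_mul_of_nonneg_left hM (by positivity : (0:ℝ) ≤ α / (n:ℝ))
    calc α / (n:ℝ) * M^2 ≤ α / (n:ℝ) * ((n:ℝ) * ∑ y, (max (f x - f y) 0)^2) := h4
      _ = α * ∑ y, (max (f x - f y) 0)^2 := by
          field_simp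
  have step2 : κ * psiUps k f x + α / (n:ℝ) * M^2
      ≤ ∑ y, (κ * Ups (f y - f x) + α * (max (f x - f y) 0)^2) := by
    rw [Finset.sum_add_distrib, ← Finset.mul_sum, ← Finset.mul_sum, ← hpsi x]
    linarith [step1]
  have step3 : ∑ y, (κ * Ups (f y - f x) + α * (max (f x - f y) 0)^2)
      ≤ ∑ y, ((Ups (f y - f x) + Ups (f x - f y))/2
          + (n:ℝ)/2 * ((Real.exp (f y - f x) - 1)*(f y - f x) - Ups (f y - f x))) :=
    Finset.sum_le_sum (fun y _ => hpt y)
  have step4 : ∑ y, ((Ups (f y - f x) + Ups (f x - f y))/2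
          + (n:ℝ)/2 * ((Real.exp (f y - f x) - 1)*(f y - f x) - Ups (f y - f x)))
      ≤ psi2Ups k f x := by
    rw [hpsi2]
    have hsplit : ∑ y, ((Ups (f y - f x) + Ups (f x - f y))/2
          + (n:ℝ)/2 * ((Real.exp (f y - f x) - 1)*(f y - f x) - Ups (f y - f x)))
        = (∑ y, Ups (f y - f x))/2 + (∑ y, Ups (f x - f y))/2
          + (n:ℝ)/2 * (∑ y, (Real.exp (f y - f x) - 1)*(f y - f x))
          - (n:ℝ)/2 * (∑ y, Ups (f y - f x)) := by
      rw [Finset.sum_add_distrib, ← Finset.sum_div, Finset.sum_add_distrib,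
        ← Finset.mul_sum, Finset.sum_sub_distrib]
      ring
    rw [hsplit]
    have hsum : ∑ y, (psiUps k f y - psiUps k f x)
        = (∑ y, psiUps k f y) - (n:ℝ) * psiUps k f x := by
      rw [Finset.sum_sub_distrib, Finset.sum_const, Finset.card_univ, nsmul_eq_mul, hn]
    rw [hsum, hpsi x]
    linarith [hlow]
  calc κ * psiUps k f x + α / (n:ℝ) * M^2
      ≤ ∑ y, (κ * Ups (f y - f x) + α * (max (f x - f y) 0)^2) := step2
    _ ≤ _ := step3
    _ ≤ psi2Ups k f x := step4
end

section
/- Let κ ∈ ℝ, δ > 0, and suppose L satisfies CD_Υ(κ,F) at some point x ∈ X with M₁(x) > 0, where F is a CD-function satisfying lim_{r→0⁺} F(r)/r^{1+δ} = 1. Then δ ≥ 1. -/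
open Real Filter MeasureTheory Set

section Aux

lemma tsum_ite_ne' {X : Type*} [DecidableEq X] (x : X) (c : X → ℝ) :
    ∑' y, (if y = x then 0 else c y) = ∑' y : {y : X // y ≠ x}, c y := by
  rw [← tsum_subtype_eq_of_support_subset (s := {y | y ≠ x})
      (f := fun y => if y = x then 0 else c y)]
  · exact tsum_congr fun y => if_neg y.2
  · intro y hy
    simp only [Function.mem_support] at hy
    intro h
    exact hy (by simp [h])

lemma Ups_zero : Ups 0 = 0 := by simp [Ups]

lemma Ups_nonneg (t : ℝ) : 0 ≤ Ups t := by
  have := Real.add_one_le_exp t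
  simp only [Ups]; linarith

lemma Ups_le_sq {t : ℝ} (ht : |t| ≤ 1) : Ups t ≤ t ^ 2 := by
  have h := abs_le.mp (Real.abs_exp_sub_one_sub_id_le ht)
  simp only [Ups]; linarith [h.2]

/-- the test function -/
noncomputable def tf {X : Type*} [DecidableEq X] (x : X) (s : ℝ) : X → ℝ :=
  fun y => if y = x then s else 0

section comp
set_option linter.unusedSectionVars false
variable {X : Type*} [DecidableEq X] (k : X → X → ℝ) (x : X) (s : ℝ)

lemma tf_bdd : BddFun (tf x s) :=
  ⟨|s|, fun y => by unfold tf; split <;> simp⟩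

lemma genOp_tf_self : genOp k (tf x s) x = -(s * M1fn k x) := by
  unfold genOp
  have h1 : ∀ y : X, k x y * (tf x s y - tf x s x)
      = if y = x then 0 else (-s) * k x y := by
    intro y
    by_cases h : y = x <;> simp [tf, h] <;> ring
  rw [tsum_congr h1, tsum_ite_ne' x, tsum_mul_left]
  unfold M1fn; ring

lemma genOp_tf_ne {y : X} (hy : y ≠ x) : genOp k (tf x s) y = k y x * s := by
  unfold genOp
  have h1 : ∀ z : X, k y z * (tf x s z - tf x s y)
      = if z = x then k y x * s else 0 := by
    intro z
    by_cases h : z = x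
    · subst h; simp [tf, if_neg hy]
    · simp [tf, h, if_neg hy]
  rw [tsum_congr h1, tsum_ite_eq]

lemma psiUps_tf_self : psiUps k (tf x s) x = Ups (-s) * M1fn k x := by
  unfold psiUps
  have h1 : ∀ y : X, k x y * Ups (tf x s y - tf x s x)
      = if y = x then 0 else Ups (-s) * k x y := by
    intro y
    by_cases h : y = x
    · simp [tf, h, Ups_zero]
    · simp [tf, h]; ring_nf
  rw [tsum_congr h1, tsum_ite_ne' x, tsum_mul_left]
  unfold M1fn; ring

lemma psiUps_tf_ne {y : X} (hy : y ≠ x) : psiUps k (tf x s) y = k y x * Ups s := by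
  unfold psiUps
  have h1 : ∀ z : X, k y z * Ups (tf x s z - tf x s y)
      = if z = x then k y x * Ups s else 0 := by
    intro z
    by_cases h : z = x
    · subst h; simp [tf, if_neg hy]
    · simp [tf, h, if_neg hy, Ups_zero]
  rw [tsum_congr h1, tsum_ite_eq]

end comp

/-- `S(x) = ∑_{y ≠ x} k(x,y) k(y,x)`. -/
noncomputable def Sq {X : Type*} (k : X → X → ℝ) (x : X) : ℝ :=
  ∑' y : {y : X // y ≠ x}, k x y * k y x

section comp2
set_option linter.unusedSectionVars false
variable {X : Type*} [DecidableEq X] {k : X → X → ℝ} (hk : KernelSetting k) (x : X) (s : ℝ)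
include hk

lemma k_le_M1 {y : X} (hy : y ≠ x) : k y x ≤ M1fn k y :=
  Summable.le_tsum (hk.2.1 y) ⟨x, Ne.symm hy⟩ fun z _ => hk.1 y z (Ne.symm z.2)

lemma hS_summable : Summable fun y : {y : X // y ≠ x} => k x y * k y x := by
  apply Summable.of_nonneg_of_le _ _ (hk.2.2.2 x)
  · exact fun y => mul_nonneg (hk.1 x y (Ne.symm y.2)) (hk.1 y x y.2)
  · exact fun y => mul_le_mul_of_nonneg_left (k_le_M1 hk x y.2) (hk.1 x y (Ne.symm y.2))

lemma Sq_nonneg : 0 ≤ Sq k x :=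
  tsum_nonneg fun y => mul_nonneg (hk.1 x y (Ne.symm y.2)) (hk.1 y x y.2)

lemma genOp_psiUps_tf : genOp k (psiUps k (tf x s)) x
    = Ups s * Sq k x - Ups (-s) * M1fn k x * M1fn k x := by
  unfold genOp
  have h1 : ∀ y : X, k x y * (psiUps k (tf x s) y - psiUps k (tf x s) x)
      = if y = x then 0
        else Ups s * (k x y * k y x) - (Ups (-s) * M1fn k x) * k x y := by
    intro y
    by_cases h : y = x
    · simp [h]
    · rw [if_neg h, psiUps_tf_ne k x s h, psiUps_tf_self k x s]
      ring
  rw [tsum_congr h1, tsum_ite_ne' x,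
    Summable.tsum_sub ((hS_summable hk x).mul_left _) ((hk.2.1 x).mul_left _),
    tsum_mul_left, tsum_mul_left]
  unfold Sq M1fn; ring

lemma bUps_tf : bUps k (tf x s) (genOp k (tf x s)) x
    = (Real.exp (-s) - 1) * s * Sq k x
      + (Real.exp (-s) - 1) * s * M1fn k x * M1fn k x := by
  unfold bUps
  have h1 : ∀ y : X, k x y * (Real.exp (tf x s y - tf x s x) - 1)
        * (genOp k (tf x s) y - genOp k (tf x s) x)
      = if y = x then 0
        else (Real.exp (-s) - 1) * s * (k x y * k y x)
          + ((Real.exp (-s) - 1) * s * M1fn k x) * k x y := by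
    intro y
    by_cases h : y = x
    · simp [h]
    · rw [if_neg h, genOp_tf_ne k x s h, genOp_tf_self k x s]
      have h2 : tf x s y - tf x s x = -s := by simp [tf, h]
      rw [h2]; ring
  rw [tsum_congr h1, tsum_ite_ne' x,
    Summable.tsum_add ((hS_summable hk x).mul_left _) ((hk.2.1 x).mul_left _),
    tsum_mul_left, tsum_mul_left]
  unfold Sq M1fn; ring

lemma psi2Ups_tf : psi2Ups k (tf x s) x
    = (1/2) * ((Ups s - (Real.exp (-s) - 1) * s) * Sq k x
      + (-(Ups (-s)) - (Real.exp (-s) - 1) * s) * M1fn k x * M1fn k x) := by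
  unfold psi2Ups
  rw [genOp_psiUps_tf hk x s, bUps_tf hk x s]
  ring

end comp2

end Aux

/-- Remark 2.5(iii): if `CD_Υ(κ,F)` holds at some point `x` with `M₁(x) > 0` for a
CD-function behaving like `r^{1+δ}` near the origin, then necessarily `δ ≥ 1`. -/
theorem stmt_18 {X : Type*} [Countable X] (k : X → X → ℝ) (hk : KernelSetting k)
    (x : X) (hM1 : 0 < M1fn k x)
    (κ δ : ℝ) (hδ : 0 < δ)
    (F : ℝ → ℝ) (hF : IsCDFunction F)
    (hlim : Tendsto (fun r => F r / r ^ (1 + δ)) (nhdsWithin 0 (Ioi 0)) (nhds 1))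
    (hCD : CDUpsAt k κ F x) :
    1 ≤ δ := by
  classical
  by_contra hcon
  push_neg at hcon
  have hSnn : 0 ≤ Sq k x := Sq_nonneg hk x
  have key : ∀ s : ℝ, 0 < s → s ≤ 1 →
      F (s * M1fn k x) ≤ (Sq k x + M1fn k x ^ 2 / 2 + |κ| * M1fn k x) * s ^ 2 := by
    intro s hs hs1
    have hcd := hCD (tf x s) (tf_bdd x s)
    rw [psiUps_tf_self k x s, genOp_tf_self k x s, psi2Ups_tf hk x s, neg_neg] at hcd
    rw [show trivExt F (s * M1fn k x) = F (s * M1fn k x) from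
      if_pos (le_of_lt (mul_pos hs hM1))] at hcd
    have habs : |s| ≤ 1 := by rw [abs_of_pos hs]; exact hs1
    have habs' : |(-s)| ≤ 1 := by rwa [abs_neg]
    have hb1 : Ups s ≤ s ^ 2 := Ups_le_sq habs
    have hb2 : Ups (-s) ≤ s ^ 2 := by
      have := Ups_le_sq habs'
      simpa using this
    have hb3 : 0 ≤ Ups (-s) := Ups_nonneg _
    have hb4 : 1 - Real.exp (-s) ≤ s := by linarith [Real.add_one_le_exp (-s)]
    have hb4s : (1 - Real.exp (-s)) * s ≤ s * s := mul_le_mul_of_nonneg_right hb4 hs.le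
    have hκ1 : -(|κ| * (s ^ 2 * M1fn k x)) ≤ κ * (Ups (-s) * M1fn k x) := by
      have h1 : Ups (-s) * M1fn k x ≤ s ^ 2 * M1fn k x :=
        mul_le_mul_of_nonneg_right hb2 hM1.le
      have h2 : 0 ≤ Ups (-s) * M1fn k x := mul_nonneg hb3 hM1.le
      rcases le_or_gt 0 κ with h | h
      · rw [abs_of_nonneg h]
        nlinarith [mul_nonneg h h2, mul_nonneg h (mul_nonneg (sq_nonneg s) hM1.le)]
      · rw [abs_of_neg h]
        nlinarith [mul_nonneg (neg_pos.mpr h).le (sub_nonneg.mpr h1)]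
    have hterm1 : (Ups s - (Real.exp (-s) - 1) * s) * Sq k x
        ≤ (s ^ 2 + s ^ 2) * Sq k x :=
      mul_le_mul_of_nonneg_right (by nlinarith) hSnn
    have hterm2 : (-(Ups (-s)) - (Real.exp (-s) - 1) * s) * M1fn k x * M1fn k x
        ≤ s ^ 2 * M1fn k x * M1fn k x := by
      have h1 : -(Ups (-s)) - (Real.exp (-s) - 1) * s ≤ s ^ 2 := by nlinarith
      exact mul_le_mul_of_nonneg_right
        (mul_le_mul_of_nonneg_right h1 hM1.le) hM1.le
    nlinarith [hcd, hterm1, hterm2, hκ1]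
  -- now the limit argument
  have hFle : ∀ᶠ r in nhdsWithin (0:ℝ) (Ioi 0),
      F r / r ^ (1 + δ)
        ≤ (Sq k x + M1fn k x ^ 2 / 2 + |κ| * M1fn k x) / M1fn k x ^ 2 * r ^ (1 - δ) := by
    filter_upwards [Ioc_mem_nhdsGT_of_mem (Set.left_mem_Ico.mpr hM1)] with r hr
    obtain ⟨hr0, hra⟩ := hr
    have hs0 : 0 < r / M1fn k x := div_pos hr0 hM1
    have hs1 : r / M1fn k x ≤ 1 := (div_le_one hM1).mpr hra
    have hFr : F r ≤ (Sq k x + M1fn k x ^ 2 / 2 + |κ| * M1fn k x) / M1fn k x ^ 2 * r ^ 2 := by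
      have h2 := key (r / M1fn k x) hs0 hs1
      rw [div_mul_cancel₀ r (ne_of_gt hM1)] at h2
      refine h2.trans (le_of_eq ?_)
      field_simp
    have hrp : (0:ℝ) < r ^ (1 + δ) := Real.rpow_pos_of_pos hr0 _
    have hdiv : F r / r ^ (1 + δ)
        ≤ ((Sq k x + M1fn k x ^ 2 / 2 + |κ| * M1fn k x) / M1fn k x ^ 2 * r ^ 2) / r ^ (1 + δ) := by
      gcongr
    refine hdiv.trans (le_of_eq ?_)
    rw [mul_div_assoc]
    congr 1
    rw [← Real.rpow_natCast r 2, ← Real.rpow_sub hr0]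
    congr 1
    push_cast
    ring
  have htend : Tendsto
      (fun r : ℝ => (Sq k x + M1fn k x ^ 2 / 2 + |κ| * M1fn k x) / M1fn k x ^ 2 * r ^ (1 - δ))
      (nhdsWithin (0:ℝ) (Ioi 0)) (nhds 0) := by
    have h1 : ContinuousAt (fun r : ℝ => r ^ (1 - δ)) 0 :=
      Real.continuousAt_rpow_const 0 _ (Or.inr (by linarith))
    have h2 : Tendsto (fun r : ℝ => r ^ (1 - δ)) (nhdsWithin (0:ℝ) (Ioi 0))
        (nhds ((0:ℝ) ^ (1 - δ))) := (h1.tendsto).mono_left nhdsWithin_le_nhds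
    rw [Real.zero_rpow (by linarith : (1:ℝ) - δ ≠ 0)] at h2
    simpa using h2.const_mul ((Sq k x + M1fn k x ^ 2 / 2 + |κ| * M1fn k x) / M1fn k x ^ 2)
  have hfin := le_of_tendsto_of_tendsto hlim htend hFle
  linarith
end
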